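/- arXiv:2006.02540 — 3 statements merged into one kernel-verified Lean document; each statement's English description precedes it below -/
import Mathlib

section
/- For all p, q ∈ ℝ³, with p⁰ = √(1+|p|²), q⁰ = √(1+|q|²), and g = √(2(p⁰q⁰ − p·q − 1)), one has |p−q|/√(p⁰q⁰) ≤ g ≤ |p−q|. -/
noncomputable def energy (p : EuclideanSpace ℝ (Fin 3)) : ℝ := Real.sqrt (1 + ‖p‖^2)

noncomputable def relMom (p q : EuclideanSpace ℝ (Fin 3)) : ℝ :=
  Real.sqrt (2 * (energy p * energy q - (inner ℝ p q : ℝ) - 1))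

lemma key_ineq (a b np nq t : ℝ) (ha : 1 ≤ a) (hb : 1 ≤ b)
    (ha2 : a^2 = 1 + np^2) (hb2 : b^2 = 1 + nq^2)
    (hnp : 0 ≤ np) (hnq : 0 ≤ nq)
    (ht : t ≤ np * nq) (ht2 : t^2 ≤ (np * nq)^2) :
    np^2 + nq^2 - 2*t ≤ a * b * (2 * (a * b - t - 1)) := by
  have hab : 1 ≤ a * b := by nlinarith
  have ht' : -(np * nq) ≤ t := by nlinarith [mul_nonneg hnp hnq]
  have hD : (0:ℝ) ≤ np^2 + nq^2 - 2*t := by nlinarith [sq_nonneg (np - nq)]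
  have hS : (0:ℝ) ≤ np^2 + nq^2 + 2*t := by nlinarith [sq_nonneg (np - nq)]
  have hpos : (0:ℝ) < (a + b)^2 := by positivity
  -- h1 : (ab-1)(a+b)^2 ≥ ab * S2
  have h1 : a * b * (np^2 + nq^2 + 2*t) ≤ (a*b - 1) * (a+b)^2 := by
    nlinarith [sq_nonneg (a*nq - b*np), mul_nonneg (mul_nonneg (le_trans zero_le_one ha) (le_trans zero_le_one hb)) (sub_nonneg.2 ht)]
  -- h2 : (a^2-b^2)^2 ≤ D2 * S2
  have h2 : (a^2 - b^2)^2 ≤ (np^2 + nq^2 - 2*t) * (np^2 + nq^2 + 2*t) := by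
    nlinarith [ht2]
  have h3 : a * b * (a - b)^2 * (a+b)^2 ≤ (a*b - 1) * (np^2 + nq^2 - 2*t) * (a+b)^2 := by
    have e1 : a * b * (a-b)^2 * (a+b)^2 = a * b * (a^2 - b^2)^2 := by ring
    have e2 : a * b * (a^2 - b^2)^2 ≤ a * b * ((np^2 + nq^2 - 2*t) * (np^2 + nq^2 + 2*t)) := by
      apply mul_le_mul_of_nonneg_left h2 (by positivity)
    have e3 : a * b * ((np^2 + nq^2 - 2*t) * (np^2 + nq^2 + 2*t))
        ≤ (a*b - 1) * (a+b)^2 * (np^2 + nq^2 - 2*t) := by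
      calc a * b * ((np^2 + nq^2 - 2*t) * (np^2 + nq^2 + 2*t))
          = (a * b * (np^2 + nq^2 + 2*t)) * (np^2 + nq^2 - 2*t) := by ring
        _ ≤ (a*b - 1) * (a+b)^2 * (np^2 + nq^2 - 2*t) :=
            mul_le_mul_of_nonneg_right h1 hD
    calc a * b * (a-b)^2 * (a+b)^2 = a * b * (a^2 - b^2)^2 := e1
      _ ≤ (a*b - 1) * (a+b)^2 * (np^2 + nq^2 - 2*t) := e2.trans e3
      _ = (a*b - 1) * (np^2 + nq^2 - 2*t) * (a+b)^2 := by ring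
  have h4 : a * b * (a - b)^2 ≤ (a*b - 1) * (np^2 + nq^2 - 2*t) :=
    le_of_mul_le_mul_right (by linarith [h3]) hpos
  nlinarith [h4]

theorem relMom_bounds (p q : EuclideanSpace ℝ (Fin 3)) :
    ‖p - q‖ / Real.sqrt (energy p * energy q) ≤ relMom p q ∧ relMom p q ≤ ‖p - q‖ := by
  set a := energy p with haa
  set b := energy q with hbb
  set t : ℝ := inner ℝ p q with htt
  have hnp : (0:ℝ) ≤ ‖p‖ := norm_nonneg p
  have hnq : (0:ℝ) ≤ ‖q‖ := norm_nonneg q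
  have ha : 1 ≤ a := by
    rw [haa, energy]
    nlinarith [Real.sqrt_nonneg (1 + ‖p‖^2), Real.sq_sqrt (show (0:ℝ) ≤ 1 + ‖p‖^2 by positivity), sq_nonneg ‖p‖]
  have hb : 1 ≤ b := by
    rw [hbb, energy]
    nlinarith [Real.sqrt_nonneg (1 + ‖q‖^2), Real.sq_sqrt (show (0:ℝ) ≤ 1 + ‖q‖^2 by positivity), sq_nonneg ‖q‖]
  have ha2 : a^2 = 1 + ‖p‖^2 := by rw [haa, energy]; exact Real.sq_sqrt (by positivity)
  have hb2 : b^2 = 1 + ‖q‖^2 := by rw [hbb, energy]; exact Real.sq_sqrt (by positivity)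
  have ht : t ≤ ‖p‖ * ‖q‖ := real_inner_le_norm p q
  have ht2 : t^2 ≤ (‖p‖ * ‖q‖)^2 := by
    have := abs_real_inner_le_norm p q
    calc t^2 = |t|^2 := (sq_abs t).symm
      _ ≤ (‖p‖ * ‖q‖)^2 := by
          apply pow_le_pow_left₀ (abs_nonneg t) this
  have hD : ‖p - q‖^2 = ‖p‖^2 + ‖q‖^2 - 2*t := by
    rw [htt, norm_sub_sq_real]; ring
  have hkey := key_ineq a b ‖p‖ ‖q‖ t ha hb ha2 hb2 hnp hnq ht ht2
  have hDnn : (0:ℝ) ≤ ‖p‖^2 + ‖q‖^2 - 2*t := by rw [← hD]; positivity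
  have habpos : (0:ℝ) < a * b := by nlinarith
  have hG2 : (0:ℝ) ≤ 2 * (a * b - t - 1) := nonneg_of_mul_nonneg_right (hDnn.trans hkey) habpos
  constructor
  · rw [div_le_iff₀ (Real.sqrt_pos.2 habpos)]
    have : relMom p q * Real.sqrt (a * b) = Real.sqrt (2 * (a*b - t - 1) * (a*b)) := by
      rw [relMom, ← Real.sqrt_mul hG2]
    rw [this]
    have : ‖p - q‖ = Real.sqrt (‖p‖^2 + ‖q‖^2 - 2*t) := by
      rw [← hD, Real.sqrt_sq (norm_nonneg _)]
    rw [this]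
    apply Real.sqrt_le_sqrt
    calc ‖p‖^2 + ‖q‖^2 - 2*t ≤ a * b * (2 * (a * b - t - 1)) := hkey
      _ = 2 * (a*b - t - 1) * (a*b) := by ring
  · rw [relMom]
    have : ‖p - q‖ = Real.sqrt (‖p - q‖^2) := (Real.sqrt_sq (norm_nonneg _)).symm
    rw [this]
    apply Real.sqrt_le_sqrt
    rw [hD]
    nlinarith [sq_nonneg (a - b)]
end

section
/- For all θ ∈ [0,1], p, q ∈ ℝ³ with p + q ≠ 0, and unit vectors w ∈ ℝ³, the quantity A := (1 − θ/2) + (θ/2)·g·(γ−1)·((p+q)·w)/|p+q|² satisfies 1 − θ < A < 1 when θ > 0 (and A = 1 if θ = 0), where g = √(2(p⁰q⁰−p·q−1)), s = g²+4, γ = (p⁰+q⁰)/√s, p⁰ = √(1+|p|²), q⁰ = √(1+|q|²). -/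
set_option maxHeartbeats 1000000

theorem A_bounds (θ : ℝ) (hθ : θ ∈ Set.Icc (0:ℝ) 1)
    (p q w : EuclideanSpace ℝ (Fin 3)) (hpq : p + q ≠ 0) (hw : ‖w‖ = 1)
    (s γ A : ℝ) (hs : s = (relMom p q)^2 + 4)
    (hγ : γ = (energy p + energy q) / Real.sqrt s)
    (hA : A = (1 - θ/2) + (θ/2) * relMom p q * (γ - 1) * (inner ℝ (p + q) w : ℝ) / ‖p + q‖^2) :
    (0 < θ → 1 - θ < A ∧ A < 1) ∧ (θ = 0 → A = 1) := by
  have hP : (energy p)^2 = 1 + ‖p‖^2 := Real.sq_sqrt (by positivity)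
  have hQ : (energy q)^2 = 1 + ‖q‖^2 := Real.sq_sqrt (by positivity)
  have hPnn : 0 ≤ energy p := Real.sqrt_nonneg _
  have hQnn : 0 ≤ energy q := Real.sqrt_nonneg _
  have hP1 : 1 ≤ energy p := by nlinarith [norm_nonneg p]
  have hQ1 : 1 ≤ energy q := by nlinarith [norm_nonneg q]
  have hPp : ‖p‖ ≤ energy p := by nlinarith [norm_nonneg p]
  have hQq : ‖q‖ ≤ energy q := by nlinarith [norm_nonneg q]
  have hCS : (inner ℝ p q : ℝ) ≤ ‖p‖ * ‖q‖ := real_inner_le_norm p q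
  have h1 : 0 ≤ energy p * energy q - (inner ℝ p q : ℝ) - 1 := by
    nlinarith [sq_nonneg (‖p‖ - ‖q‖), sq_nonneg (energy p * energy q - (1 + ‖p‖*‖q‖)),
      mul_nonneg hPnn hQnn, norm_nonneg p, norm_nonneg q]
  set g := relMom p q with hgdef
  have hg2 : g^2 = 2 * (energy p * energy q - (inner ℝ p q : ℝ) - 1) :=
    Real.sq_sqrt (by linarith)
  have hgnn : 0 ≤ g := Real.sqrt_nonneg _
  have hs0 : 0 < s := by rw [hs]; positivity
  set sq := Real.sqrt s with hsqdef
  have hsq2 : sq^2 = s := Real.sq_sqrt hs0.le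
  have hsq0 : 0 < sq := Real.sqrt_pos.mpr hs0
  set e := energy p + energy q with hedef
  have hnadd := norm_add_sq_real p q
  have hkey : e^2 = s + ‖p+q‖^2 := by
    rw [hs]; nlinarith [hP, hQ, hg2, hnadd]
  have hpqpos : 0 < ‖p+q‖ := norm_pos_iff.mpr hpq
  have he : sq < e := by
    have h2 : sq^2 < e^2 := by
      have := pow_pos hpqpos 2; linarith
    exact lt_of_pow_lt_pow_left₀ 2 (by positivity) h2
  have hsub : γ - 1 = ‖p+q‖^2 / (sq * (e + sq)) := by
    rw [hγ, div_sub_one hsq0.ne', div_eq_div_iff hsq0.ne' (by positivity)]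
    linear_combination sq * hkey - sq * hsq2
  have hglt : g < sq := by
    have h2 : g^2 < sq^2 := by rw [hsq2, hs]; nlinarith
    exact lt_of_pow_lt_pow_left₀ 2 hsq0.le h2
  have hnlt : ‖p+q‖ < e + sq := by
    have := norm_add_le p q
    linarith
  have hip : |(inner ℝ (p+q) w : ℝ)| ≤ ‖p+q‖ := by
    have := abs_real_inner_le_norm (p+q) w
    rwa [hw, mul_one] at this
  set X : ℝ := g * (inner ℝ (p+q) w : ℝ) / (sq * (e + sq)) with hXdef
  have hXbd : |X| < 1 := by
    rw [hXdef, abs_div, abs_of_pos (by positivity : (0:ℝ) < sq * (e + sq)),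
      div_lt_one (by positivity), abs_mul, abs_of_nonneg hgnn]
    calc g * |(inner ℝ (p+q) w : ℝ)| ≤ g * ‖p+q‖ := by
          exact mul_le_mul_of_nonneg_left hip hgnn
      _ < sq * (e + sq) := by
          apply mul_lt_mul'' hglt hnlt hgnn (norm_nonneg _)
  have hAX : A = (1 - θ/2) + (θ/2) * X := by
    rw [hA, hsub, hXdef]
    field_simp
  have hX1 : -1 < X := (abs_lt.mp hXbd).1
  have hX2 : X < 1 := (abs_lt.mp hXbd).2
  constructor
  · intro hθ0
    constructor <;> nlinarith
  · intro h0
    rw [hAX, h0]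
    ring
end

section
/- Let p, q ∈ ℝ³ with p+q ≠ 0 and w ∈ ℝ³ a unit vector, and let p' = (p+q)/2 + (g/2)(w + (γ−1)(p+q)((p+q)·w)/|p+q|²) and q' = (p+q)/2 − (g/2)(w + (γ−1)(p+q)((p+q)·w)/|p+q|²). Then p'⁰ + q'⁰ = p⁰ + q⁰, i.e. energy is conserved, where x⁰ := √(1+|x|²) for any x ∈ ℝ³. -/
set_option maxHeartbeats 1000000 in
theorem energy_conservation (p q w : EuclideanSpace ℝ (Fin 3))
    (hpq : p + q ≠ 0) (hw : ‖w‖ = 1)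
    (γ : ℝ) (hγ : γ = (energy p + energy q) / Real.sqrt ((relMom p q)^2 + 4))
    (p' q' : EuclideanSpace ℝ (Fin 3))
    (hp' : p' = (1/2 : ℝ) • (p + q) + (relMom p q / 2) •
      (w + ((γ - 1) * (inner ℝ (p + q) w : ℝ) / ‖p + q‖^2) • (p + q)))
    (hq' : q' = (1/2 : ℝ) • (p + q) - (relMom p q / 2) •
      (w + ((γ - 1) * (inner ℝ (p + q) w : ℝ) / ‖p + q‖^2) • (p + q))) :
    energy p' + energy q' = energy p + energy q := by
  have hep2 : energy p ^ 2 = 1 + ‖p‖^2 := Real.sq_sqrt (by positivity)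
  have heq2 : energy q ^ 2 = 1 + ‖q‖^2 := Real.sq_sqrt (by positivity)
  have hep0 : 0 ≤ energy p := Real.sqrt_nonneg _
  have heq0 : 0 ≤ energy q := Real.sqrt_nonneg _
  have hep1 : 1 ≤ energy p := by nlinarith [sq_nonneg (‖p‖)]
  have heq1 : 1 ≤ energy q := by nlinarith [sq_nonneg (‖q‖)]
  have hipq : (inner ℝ p q : ℝ) ≤ ‖p‖ * ‖q‖ := real_inner_le_norm p q
  have hee : 1 + ‖p‖ * ‖q‖ ≤ energy p * energy q := by
    nlinarith [sq_nonneg (‖p‖ - ‖q‖), norm_nonneg p, norm_nonneg q,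
      mul_nonneg hep0 heq0, mul_nonneg (norm_nonneg p) (norm_nonneg q)]
  have harg : 0 ≤ 2 * (energy p * energy q - (inner ℝ p q : ℝ) - 1) := by
    nlinarith [mul_nonneg (norm_nonneg p) (norm_nonneg q)]
  set g : ℝ := relMom p q with hgdef
  set E : ℝ := energy p + energy q with hEdef
  set s : ℝ := g ^ 2 + 4 with hsdef
  set r : ℝ := Real.sqrt s with hrdef
  set t : ℝ := (inner ℝ (p + q) w : ℝ) with htdef
  set c : ℝ := (γ - 1) * t / ‖p + q‖ ^ 2 with hcdef
  have hPn : ‖p + q‖ ≠ 0 := by simpa using hpq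
  have hn0 : (0:ℝ) < ‖p + q‖ ^ 2 := by positivity
  have hg2 : g ^ 2 = 2 * (energy p * energy q - (inner ℝ p q : ℝ) - 1) :=
    Real.sq_sqrt harg
  have hg0 : 0 ≤ g := Real.sqrt_nonneg _
  have hs0 : (0:ℝ) < s := by positivity
  have hr2 : r ^ 2 = s := Real.sq_sqrt hs0.le
  have hr0 : (0:ℝ) < r := Real.sqrt_pos.2 hs0
  have hct : c * ‖p + q‖ ^ 2 = (γ - 1) * t := by
    rw [hcdef]; field_simp
  clear_value c t r s E g
  have hE0 : (0:ℝ) < E := by rw [hEdef]; linarith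
  have hnorm : ‖p + q‖ ^ 2 = ‖p‖ ^ 2 + 2 * (inner ℝ p q : ℝ) + ‖q‖ ^ 2 :=
    norm_add_sq_real p q
  have hE2 : E ^ 2 = s + ‖p + q‖ ^ 2 := by
    linear_combination (E + energy p + energy q) * hEdef + hep2 + heq2 - hg2
      - hsdef - hnorm
  have hγr : γ * r = E := by
    rw [hγ]; field_simp
  have hγs : γ ^ 2 * s = E ^ 2 := by
    linear_combination (γ * r + E) * hγr - γ ^ 2 * hr2
  have hγ21 : (γ ^ 2 - 1) * s = ‖p + q‖ ^ 2 := by linear_combination hγs + hE2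
  have hEr : E * r = γ * s := by
    linear_combination (-r) * hγr + γ * hr2
  have ht : |t| ≤ ‖p + q‖ := by
    rw [htdef]
    calc |(inner ℝ (p + q) w : ℝ)| ≤ ‖p + q‖ * ‖w‖ := abs_real_inner_le_norm _ _
      _ = ‖p + q‖ := by rw [hw, mul_one]
  have hc2s : (2 * (c * t) + c ^ 2 * ‖p + q‖ ^ 2) * s * ‖p + q‖ ^ 2
      = t ^ 2 * ‖p + q‖ ^ 2 := by
    linear_combination (s * (c * ‖p + q‖ ^ 2 + (γ + 1) * t)) * hct + t ^ 2 * hγ21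
  have hc2 : (2 * (c * t) + c ^ 2 * ‖p + q‖ ^ 2) * s = t ^ 2 :=
    mul_right_cancel₀ hn0.ne' hc2s
  have hu : ‖w + c • (p + q)‖ ^ 2 = 1 + 2 * (c * t) + c ^ 2 * ‖p + q‖ ^ 2 := by
    rw [norm_add_sq_real, real_inner_smul_right, norm_smul, hw,
      show (inner ℝ w (p + q) : ℝ) = t from by rw [htdef, real_inner_comm],
      Real.norm_eq_abs, mul_pow, sq_abs]
    ring
  have hPu : (inner ℝ (p + q) (w + c • (p + q)) : ℝ) = γ * t := by
    rw [inner_add_right, real_inner_smul_right, real_inner_self_eq_norm_sq,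
      ← htdef]
    linear_combination hct
  have key : ∀ (x : EuclideanSpace ℝ (Fin 3)) (σ : ℝ), σ = 1 ∨ σ = -1 →
      x = (1/2 : ℝ) • (p + q) + (σ * (g / 2)) • (w + c • (p + q)) →
      energy x = E / 2 + σ * (g * t / (2 * r)) := by
    intro x σ hσ hx
    have hσ2 : σ ^ 2 = 1 := by rcases hσ with h | h <;> rw [h] <;> norm_num
    have hxn : ‖x‖ ^ 2 = ‖p + q‖ ^ 2 / 4 + σ * (g / 2) * (γ * t)
        + σ ^ 2 * (g / 2) ^ 2 * (1 + 2 * (c * t) + c ^ 2 * ‖p + q‖ ^ 2) := by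
      rw [hx, norm_add_sq_real, real_inner_smul_left, real_inner_smul_right,
        hPu, norm_smul, norm_smul]
      simp only [Real.norm_eq_abs, mul_pow, sq_abs]
      rw [hu]
      ring
    have hmain : (1 + ‖x‖ ^ 2) * (4 * s) = (E * r + σ * (g * t)) ^ 2 := by
      rw [hxn]
      linear_combination σ ^ 2 * g ^ 2 * hc2 - 2 * σ * (g * t) * hEr
        - E ^ 2 * hr2 - s * hE2 - s * hsdef + g ^ 2 * s * hσ2
    have hA2 : (E / 2 + σ * (g * t / (2 * r))) ^ 2 * (4 * r ^ 2)
        = (E * r + σ * (g * t)) ^ 2 := by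
      field_simp
      ring
    have hsq : 1 + ‖x‖ ^ 2 = (E / 2 + σ * (g * t / (2 * r))) ^ 2 := by
      have h4 : (4 * s : ℝ) ≠ 0 := by positivity
      apply mul_right_cancel₀ h4
      rw [hmain, ← hA2, hr2]
    have hErg : g * ‖p + q‖ ≤ E * r := by
      have h0 : (E * r) ^ 2 = (s + ‖p + q‖ ^ 2) * s := by
        rw [mul_pow, hE2, hr2]
      have h1 : (g * ‖p + q‖) ^ 2 ≤ (E * r) ^ 2 := by
        rw [h0, hsdef]
        have hdiff : (g ^ 2 + 4 + ‖p + q‖ ^ 2) * (g ^ 2 + 4) - (g * ‖p + q‖) ^ 2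
            = (g ^ 2 + 4) ^ 2 + 4 * ‖p + q‖ ^ 2 := by ring
        linarith [sq_nonneg (g ^ 2 + 4), hn0]
      calc g * ‖p + q‖ = Real.sqrt ((g * ‖p + q‖) ^ 2) :=
            (Real.sqrt_sq (mul_nonneg hg0 (norm_nonneg _))).symm
        _ ≤ Real.sqrt ((E * r) ^ 2) := Real.sqrt_le_sqrt h1
        _ = E * r := Real.sqrt_sq (mul_pos hE0 hr0).le
    have hpos : 0 ≤ E / 2 + σ * (g * t / (2 * r)) := by
      have h1 : |σ * (g * t)| ≤ g * ‖p + q‖ := by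
        rw [abs_mul, abs_mul]
        have hσa : |σ| = 1 := by rcases hσ with h | h <;> rw [h] <;> norm_num
        rw [hσa, one_mul, abs_of_nonneg hg0]
        exact mul_le_mul_of_nonneg_left ht hg0
      have h2 : -(E * r) ≤ σ * (g * t) := by
        have := (abs_le.1 h1).1
        linarith
      have heq' : E / 2 + σ * (g * t / (2 * r)) = (E * r + σ * (g * t)) / (2 * r) := by
        field_simp
      rw [heq']
      exact div_nonneg (by linarith) (by linarith)
    show Real.sqrt (1 + ‖x‖ ^ 2) = E / 2 + σ * (g * t / (2 * r))
    rw [hsq, Real.sqrt_sq hpos]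
  have hA : energy p' = E / 2 + 1 * (g * t / (2 * r)) := by
    apply key p' 1 (Or.inl rfl)
    rw [hp']
    module
  have hB : energy q' = E / 2 + (-1) * (g * t / (2 * r)) := by
    apply key q' (-1) (Or.inr rfl)
    rw [hq']
    module
  rw [hA, hB, hEdef]
  ring
end
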